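/- Let G be a finite directed graph (possibly containing directed cycles) and let i, j be two vertices of G. Then i is an ancestor of j in G (i ∈ AN_G(j)) if and only if there exists an acyclification G' of G with i ∈ AN_{G'}(j). Equivalently, AN_G(j) is the union, over all acyclifications G' of G, of AN_{G'}(j). -/

import Mathlib

/-!
Directed (possibly cyclic) graphs on a vertex type `V` are given by their
edge relation `E : V → V → Prop`.
-/

/-- `Anc E i j` : `i` is an ancestor of `j` in the graph with edge relation `E`,
i.e. there is a directed path (possibly of length 0) from `i` to `j`. -/
def Anc {V : Type*} (E : V → V → Prop) (i j : V) : Prop :=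
  Relation.ReflTransGen E i j

/-- `InSC E i j` : `i` belongs to the strongly connected component of `j`,
i.e. `i ∈ AN_G(j) ∩ DE_G(j)`. -/
def InSC {V : Type*} (E : V → V → Prop) (i j : V) : Prop :=
  Anc E i j ∧ Anc E j i

/-- A directed graph is acyclic if it contains no directed cycle. -/
def Acyclic {V : Type*} (E : V → V → Prop) : Prop :=
  ∀ i, ¬ Relation.TransGen E i i

/-- `G' = (V, E')` is an acyclification of `G = (V, E)`:
`G'` is acyclic; for `i ∉ SC_G(j)`, `i → j ∈ E'` iff some `k ∈ SC_G(j)` has `i → k ∈ E`;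
and for distinct `i ∈ SC_G(j)`, `i → j ∈ E'` or `j → i ∈ E'`. -/
def IsAcyclification {V : Type*} (E E' : V → V → Prop) : Prop :=
  Acyclic E' ∧
  (∀ i j, ¬ InSC E i j → (E' i j ↔ ∃ k, InSC E k j ∧ E i k)) ∧
  (∀ i j, i ≠ j → InSC E i j → (E' i j ∨ E' j i))

/-- A walk in the graph with edge relation `E`: a sequence of `len + 1` vertices
`v 0, …, v len` together with edge directions `d 0, …, d (len - 1)`;
if `d k = true` the `k`-th edge is `v k → v (k+1) ∈ E`, otherwise it is
`v (k+1) → v k ∈ E`.  Vertices and edges may repeat. -/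
structure Walk {V : Type*} (E : V → V → Prop) where
  len : ℕ
  v : ℕ → V
  d : ℕ → Bool
  valid : ∀ k, k < len →
    (d k = true → E (v k) (v (k + 1))) ∧ (d k = false → E (v (k + 1)) (v k))

/-- The interior node at position `k` (with `0 < k < w.len`) is a collider on the
walk: both adjacent edges point into it. -/
def IsCollider {V : Type*} {E : V → V → Prop} (w : Walk E) (k : ℕ) : Prop :=
  w.d (k - 1) = true ∧ w.d k = false

/-- `x` is an ancestor of the set `C`. -/
def AncOfSet {V : Type*} (E : V → V → Prop) (C : Set V) (x : V) : Prop :=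
  ∃ c ∈ C, Anc E x c

/-- The walk `w` is d-blocked by the set `C`. -/
def DBlocked {V : Type*} (E : V → V → Prop) (C : Set V) (w : Walk E) : Prop :=
  w.v 0 ∈ C ∨ w.v w.len ∈ C ∨
  ∃ k, 0 < k ∧ k < w.len ∧
    ((IsCollider w k ∧ ¬ AncOfSet E C (w.v k)) ∨
     (¬ IsCollider w k ∧ w.v k ∈ C))

/-- The walk `w` is σ-blocked by the set `C`. -/
def SigmaBlocked {V : Type*} (E : V → V → Prop) (C : Set V) (w : Walk E) : Prop :=
  w.v 0 ∈ C ∨ w.v w.len ∈ C ∨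
  ∃ k, 0 < k ∧ k < w.len ∧
    ((IsCollider w k ∧ ¬ AncOfSet E C (w.v k)) ∨
     (w.v k ∈ C ∧
       ((w.d (k - 1) = true ∧ w.d k = true ∧ ¬ InSC E (w.v (k + 1)) (w.v k)) ∨
        (w.d (k - 1) = false ∧ w.d k = false ∧ ¬ InSC E (w.v (k - 1)) (w.v k)) ∨
        (w.d (k - 1) = false ∧ w.d k = true ∧
          (¬ InSC E (w.v (k - 1)) (w.v k) ∨ ¬ InSC E (w.v (k + 1)) (w.v k))))))

/-- `A` is d-separated from `B` by `C` in the graph with edge relation `E`. -/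
def DSep {V : Type*} (E : V → V → Prop) (A B C : Set V) : Prop :=
  ∀ w : Walk E, w.v 0 ∈ A → w.v w.len ∈ B → DBlocked E C w

/-- `A` is σ-separated from `B` by `C` in the graph with edge relation `E`. -/
def SigmaSep {V : Type*} (E : V → V → Prop) (A B C : Set V) : Prop :=
  ∀ w : Walk E, w.v 0 ∈ A → w.v w.len ∈ B → SigmaBlocked E C w

/-- The independence model under d-separation. -/
def IMd {V : Type*} (E : V → V → Prop) : Set (Set V × Set V × Set V) :=
  {t | DSep E t.1 t.2.1 t.2.2}

/-- The independence model under σ-separation. -/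
def IMsigma {V : Type*} (E : V → V → Prop) : Set (Set V × Set V × Set V) :=
  {t | SigmaSep E t.1 t.2.1 t.2.2}

section Aux

variable {V : Type*}

private lemma anc_refl (E : V → V → Prop) (x : V) : Anc E x x :=
  Relation.ReflTransGen.refl

private lemma anc_trans {E : V → V → Prop} {x y z : V} (h1 : Anc E x y) (h2 : Anc E y z) :
    Anc E x z := Relation.ReflTransGen.trans h1 h2

private lemma inSC_refl (E : V → V → Prop) (x : V) : InSC E x x :=
  ⟨anc_refl E x, anc_refl E x⟩

/-- Any edge of any acyclification connects an ancestor pair of `E`. -/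
private lemma acyclification_edge_anc {E E' : V → V → Prop}
    (h : IsAcyclification E E') {x y : V} (hxy : E' x y) : Anc E x y := by
  by_cases hsc : InSC E x y
  · exact hsc.1
  · obtain ⟨k, hk, hek⟩ := (h.2.1 x y hsc).1 hxy
    exact anc_trans (Relation.ReflTransGen.single hek) hk.1

private lemma acyclification_anc_sub {E E' : V → V → Prop}
    (h : IsAcyclification E E') {x y : V} (hxy : Anc E' x y) : Anc E x y := by
  induction hxy with
  | refl => exact anc_refl E x
  | tail _ he ih => exact anc_trans ih (acyclification_edge_anc h he)

/-- For each vertex `i` there is an acyclification capturing all descendants of `i`. -/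
private lemma exists_acyclification_of_anc (E : V → V → Prop) (i : V) :
    ∃ E' : V → V → Prop, IsAcyclification E E' ∧ ∀ j, Anc E i j → Anc E' i j := by
  classical
  -- partial order putting `i` first in its strongly connected component
  set r : V → V → Prop := fun x y =>
    (Anc E x y ∧ ¬ InSC E x y) ∨ x = y ∨ (x = i ∧ InSC E i y) with hr
  haveI : IsPartialOrder V r := by
    refine { refl := fun x => Or.inr (Or.inl rfl), trans := ?_, antisymm := ?_ }
    · rintro x y z (⟨hxy, hnxy⟩ | rfl | ⟨rfl, hiy⟩) (⟨hyz, hnyz⟩ | rfl | ⟨rfl, hiz⟩)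
      · refine Or.inl ⟨anc_trans hxy hyz, fun hsc => hnxy ⟨hxy, anc_trans hyz hsc.2⟩⟩
      · exact Or.inl ⟨hxy, hnxy⟩
      · refine Or.inl ⟨anc_trans hxy hiz.1, fun hsc => ?_⟩
        exact hnxy ⟨hxy, anc_trans hiz.1 hsc.2⟩
      · exact Or.inl ⟨hyz, hnyz⟩
      · exact Or.inr (Or.inl rfl)
      · exact Or.inr (Or.inr ⟨rfl, hiz⟩)
      · refine Or.inl ⟨anc_trans hiy.1 hyz, fun hsc => ?_⟩
        exact hnyz ⟨hyz, anc_trans hsc.2 hiy.1⟩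
      · exact Or.inr (Or.inr ⟨rfl, hiy⟩)
      · exact Or.inr (Or.inr ⟨rfl, hiz⟩)
    · rintro x y (⟨hxy, hnxy⟩ | rfl | ⟨rfl, hiy⟩) (⟨hyx, hnyx⟩ | heq | ⟨rfl, hix⟩)
      · exact absurd ⟨hxy, hyx⟩ hnxy
      · exact heq.symm
      · exact absurd ⟨hxy, hix.1⟩ hnxy
      · rfl
      · rfl
      · rfl
      · exact absurd ⟨hyx, hiy.1⟩ hnyx
      · exact heq.symm
      · rfl
  obtain ⟨s, hs, hrs⟩ := extend_partialOrder r
  -- the acyclified edge relation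
  set E' : V → V → Prop := fun x y =>
    if InSC E x y then x ≠ y ∧ s x y else ∃ k, InSC E k y ∧ E x k with hE'
  have hedge_strict : ∀ x y, E' x y → s x y ∧ x ≠ y := by
    intro x y hxy
    by_cases hsc : InSC E x y
    · rw [hE'] at hxy; simp only [hsc, if_true] at hxy
      exact ⟨hxy.2, hxy.1⟩
    · rw [hE'] at hxy; simp only [hsc, if_false] at hxy
      obtain ⟨k, hk, hek⟩ := hxy
      have hanc : Anc E x y := anc_trans (Relation.ReflTransGen.single hek) hk.1
      have hne : x ≠ y := by rintro rfl; exact hsc (inSC_refl E x)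
      exact ⟨hrs x y (Or.inl ⟨hanc, hsc⟩), hne⟩
  have hacyclic : Acyclic E' := by
    intro x hx
    have hstr : Relation.TransGen (fun a b => s a b ∧ a ≠ b) x x :=
      Relation.TransGen.mono (fun a b h => hedge_strict a b h) x x hx
    have htrans : Transitive (fun a b : V => s a b ∧ a ≠ b) := by
      rintro a b c ⟨hab, hab'⟩ ⟨hbc, hbc'⟩
      refine ⟨hs.trans a b c hab hbc, fun h => ?_⟩
      subst h
      exact hab' (hs.antisymm a b hab hbc)
    rw [@Relation.transGen_eq_self _ _ ⟨htrans⟩] at hstr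
    exact hstr.2 rfl
  have hacy : IsAcyclification E E' := by
    refine ⟨hacyclic, ?_, ?_⟩
    · intro x y hsc
      rw [hE']; simp only [hsc, if_false]
    · intro x y hne hsc
      have hsymm : InSC E y x := ⟨hsc.2, hsc.1⟩
      rcases hs.total x y with h | h
      · left; rw [hE']; simp only [hsc, if_true]; exact ⟨hne, h⟩
      · right; rw [hE']; simp only [hsymm, if_true]; exact ⟨hne.symm, h⟩
  refine ⟨E', hacy, fun j hij => ?_⟩
  -- stronger statement by induction along the path
  have key : ∀ z, Anc E i z → ∀ z', InSC E z z' → Anc E' i z' := by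
    intro z hz
    induction hz with
    | refl =>
      intro z' hsc
      by_cases hne : i = z'
      · subst hne; exact anc_refl E' i
      · have hedge : E' i z' := by
          rw [hE']; simp only [hsc, if_true]
          exact ⟨hne, hrs i z' (Or.inr (Or.inr ⟨rfl, hsc⟩))⟩
        exact Relation.ReflTransGen.single hedge
    | @tail b c _ he ih =>
      intro z' hsc
      by_cases hbc : InSC E b z'
      · exact ih z' hbc
      · have hb : Anc E' i b := ih b (inSC_refl E b)
        have hedge : E' b z' := by
          rw [hE']; simp only [hbc, if_false]
          exact ⟨c, hsc, he⟩
        exact Relation.ReflTransGen.tail hb hedge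
  exact key j hij j (inSC_refl E j)

end Aux

/-- `i ∈ AN_G(j)` iff there exists an acyclification `G'` of `G`
with `i ∈ AN_{G'}(j)`; equivalently `AN_G(j)` is the union of `AN_{G'}(j)` over
all acyclifications `G'` of `G`. -/
theorem ancestor_iff_exists_acyclification {V : Type*} [Fintype V]
    (E : V → V → Prop) (hE : ∀ v, ¬ E v v) :
    (∀ i j : V, Anc E i j ↔
      ∃ E' : V → V → Prop, IsAcyclification E E' ∧ Anc E' i j) ∧
    (∀ j : V, {i | Anc E i j} =
      ⋃ E' ∈ {E' : V → V → Prop | IsAcyclification E E'}, {i | Anc E' i j}) := by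
  have h1 : ∀ i j : V, Anc E i j ↔
      ∃ E' : V → V → Prop, IsAcyclification E E' ∧ Anc E' i j := by
    intro i j
    constructor
    · intro h
      obtain ⟨E', hE', hall⟩ := exists_acyclification_of_anc E i
      exact ⟨E', hE', hall j h⟩
    · rintro ⟨E', hE', h⟩
      exact acyclification_anc_sub hE' h
  refine ⟨h1, fun j => ?_⟩
  ext x
  simp only [Set.mem_setOf_eq, Set.mem_iUnion]
  rw [h1 x j]
  constructor
  · rintro ⟨E', hE', h⟩; exact ⟨E', hE', h⟩
  · rintro ⟨E', hE', h⟩; exact ⟨E', hE', h⟩
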